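/- w(ω × α) = α for every ordinal α, where ω × α carries the componentwise product order. -/

import Mathlib

universe u

open Ordinal

/-- The rank of a well-founded relation: the least ordinal `γ` admitting a
strictly `r`-decreasing... i.e. `r a b → f a < f b`; equals `sup (rank a + 1)`. -/
noncomputable def relRank {β : Type u} (r : β → β → Prop) : Ordinal.{u} :=
  haveI := Classical.propDecidable (WellFounded r)
  if h : WellFounded r then ⨆ a : β, Order.succ ((h.apply a).rank) else 0

/-- `extRel T s t` : `s` strictly extends `t` (both in tree `T`). -/
def extRel {α : Type u} (T : Set (List α)) (s t : T) : Prop :=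
  t.1 <+: s.1 ∧ t.1 ≠ s.1

/-- Rank of a tree of finite sequences ordered by the initial segment relation. -/
noncomputable def treeRank {α : Type u} (T : Set (List α)) : Ordinal.{u} :=
  relRank (extRel T)

/-- Non-empty finite sequences of pairwise incomparable elements. -/
def IncSeqs (P : Type u) [Preorder P] : Set (List P) :=
  {l | l ≠ [] ∧ l.Pairwise fun x y => ¬ x ≤ y ∧ ¬ y ≤ x}

/-- Non-empty strictly descending finite sequences. -/
def DecSeqs (P : Type u) [Preorder P] : Set (List P) :=
  {l | l ≠ [] ∧ l.Pairwise fun x y => y < x}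

/-- Non-empty bad sequences. -/
def BadSeqs (P : Type u) [Preorder P] : Set (List P) :=
  {l | l ≠ [] ∧ l.Pairwise fun x y => ¬ x ≤ y}

/-- Width of a FAC (quasi-)order: the rank of its tree of antichain sequences. -/
noncomputable def width (P : Type u) [Preorder P] : Ordinal.{u} := treeRank (IncSeqs P)

/-- Height: the rank of the tree of strictly descending sequences. -/
noncomputable def height (P : Type u) [Preorder P] : Ordinal.{u} := treeRank (DecSeqs P)

/-- Maximal order type: the rank of the tree of bad sequences. -/
noncomputable def mot (P : Type u) [Preorder P] : Ordinal.{u} := treeRank (BadSeqs P)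

/-- Finite antichain condition. -/
def FAC (P : Type u) [Preorder P] : Prop :=
  ∀ A : Set P, IsAntichain (· ≤ ·) A → A.Finite

/-- Well quasi-order: every infinite sequence is good. -/
def IsWQO (P : Type u) [Preorder P] : Prop :=
  ∀ f : ℕ → P, ∃ i j : ℕ, i < j ∧ f i ≤ f j

/-- Well partial order. -/
def IsWPO (P : Type u) [Preorder P] : Prop :=
  WellFounded ((· < ·) : P → P → Prop) ∧ FAC P



/- ===== Auxiliary development for `stmt_17` ===== -/

section Stmt17Aux

open Ordinal Order

instance instWOtoType (o : Ordinal.{u}) :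
    IsWellOrder o.ToType ((· < ·) : o.ToType → o.ToType → Prop) := isWellOrder_lt

namespace Stmt17

/-- Incomparability. -/
def Incomp {Q : Type*} [Preorder Q] (a b : Q) : Prop := ¬ a ≤ b ∧ ¬ b ≤ a

theorem Incomp.symm {Q : Type*} [Preorder Q] {a b : Q} (h : Incomp a b) : Incomp b a :=
  ⟨h.2, h.1⟩

theorem incomp_symmetric {Q : Type*} [Preorder Q] : Symmetric (Incomp (Q := Q)) :=
  fun _ _ h => h.symm

/-- The product `ω × α`. -/
abbrev PP (α : Ordinal.{u}) : Type u := Ordinal.omega0.ToType × α.ToType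

/-- `typein` shorthand. -/
noncomputable def tyo {o : Ordinal.{u}} (x : o.ToType) : Ordinal.{u} :=
  typein ((· < ·) : o.ToType → o.ToType → Prop) x

theorem tyo_lt_tyo {o : Ordinal.{u}} {x y : o.ToType} : tyo x < tyo y ↔ x < y :=
  typein_lt_typein _

theorem tyo_lt_self {o : Ordinal.{u}} (x : o.ToType) : tyo x < o := typein_lt_self x

theorem tyo_inj {o : Ordinal.{u}} {x y : o.ToType} (h : tyo x = tyo y) : x = y := by
  rcases lt_trichotomy x y with h' | h' | h'
  · exact absurd h (ne_of_lt (tyo_lt_tyo.2 h'))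
  · exact h'
  · exact absurd h.symm (ne_of_lt (tyo_lt_tyo.2 h'))

theorem tyo_enum {o γ : Ordinal.{u}} (h : γ < type ((· < ·) : o.ToType → o.ToType → Prop)) :
    tyo (enum ((· < ·) : o.ToType → o.ToType → Prop) ⟨γ, h⟩) = γ :=
  typein_enum _ _

theorem exists_gt_omega (m : Ordinal.omega0.ToType) : ∃ n, m < n := by
  have hmlt : tyo m + 1 <
      type ((· < ·) : Ordinal.omega0.ToType → Ordinal.omega0.ToType → Prop) := by
    rw [type_toType, Ordinal.add_one_eq_succ]
    exact isSuccLimit_omega0.succ_lt (tyo_lt_self _)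
  refine ⟨enum ((· < ·) : Ordinal.omega0.ToType → Ordinal.omega0.ToType → Prop)
    ⟨tyo m + 1, hmlt⟩, ?_⟩
  rw [← tyo_lt_tyo, tyo_enum hmlt, Ordinal.add_one_eq_succ]
  exact Order.lt_succ _

variable {α : Ordinal.{u}}

theorem snd_ne {a b : PP α} (h : Incomp a b) : a.2 ≠ b.2 := by
  intro he
  rcases le_total a.1 b.1 with h1 | h1
  · exact h.1 (Prod.le_def.2 ⟨h1, he.le⟩)
  · exact h.2 (Prod.le_def.2 ⟨h1, he.ge⟩)

theorem fst_ne {a b : PP α} (h : Incomp a b) : a.1 ≠ b.1 := by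
  intro he
  rcases le_total a.2 b.2 with h1 | h1
  · exact h.1 (Prod.le_def.2 ⟨he.le, h1⟩)
  · exact h.2 (Prod.le_def.2 ⟨he.ge, h1⟩)

theorem fst_lt_of_incomp_of_le {a b : PP α} (h : Incomp a b) (h2 : b.2 ≤ a.2) : a.1 < b.1 := by
  by_contra hn
  exact h.2 (Prod.le_def.2 ⟨not_lt.1 hn, h2⟩)

theorem exists_ub_list (l : List (PP α)) (hne : Nonempty (Ordinal.omega0.{u}).ToType) :
    ∃ n : Ordinal.omega0.ToType, ∀ b ∈ l, b.1 < n := by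
  induction l with
  | nil => exact ⟨Classical.choice hne, by simp⟩
  | cons x l IH =>
    obtain ⟨n, hn⟩ := IH
    obtain ⟨n', hn'⟩ := exists_gt_omega (max x.1 n)
    refine ⟨n', ?_⟩
    intro b hb
    rcases List.mem_cons.1 hb with rfl | hb
    · exact lt_of_le_of_lt (le_max_left _ _) hn'
    · exact lt_of_lt_of_le (hn b hb) ((le_max_right _ _).trans hn'.le)

/-- The finset of second coordinates. -/
noncomputable def sndF (l : List (PP α)) : Finset α.ToType :=
  (l.map Prod.snd).toFinset

theorem mem_sndF {l : List (PP α)} {y : α.ToType} : y ∈ sndF l ↔ ∃ e ∈ l, e.2 = y := by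
  simp [sndF]

theorem sndF_nonempty {l : List (PP α)} (hl : l ≠ []) : (sndF l).Nonempty := by
  obtain ⟨e, he⟩ := List.exists_mem_of_ne_nil l hl
  exact ⟨e.2, mem_sndF.2 ⟨e, he, rfl⟩⟩

/-- The least second coordinate. -/
noncomputable def xmin (l : List (PP α)) (hl : l ≠ []) : α.ToType :=
  (sndF l).min' (sndF_nonempty hl)

theorem xmin_le {l : List (PP α)} (hl : l ≠ []) {e : PP α} (he : e ∈ l) :
    xmin l hl ≤ e.2 :=
  Finset.min'_le _ _ (mem_sndF.2 ⟨e, he, rfl⟩)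

theorem le_xmin {l : List (PP α)} (hl : l ≠ []) {b : α.ToType} (hb : ∀ e ∈ l, b ≤ e.2) :
    b ≤ xmin l hl :=
  Finset.le_min' _ _ _ (fun y hy => by obtain ⟨e, he, rfl⟩ := mem_sndF.1 hy; exact hb e he)

theorem exists_xmin {l : List (PP α)} (hl : l ≠ []) : ∃ e ∈ l, e.2 = xmin l hl :=
  mem_sndF.1 (Finset.min'_mem _ _)

/-- Sets of elements that may be added "above the minimum" to an antichain list. -/
def Good (l : List (PP α)) (hl : l ≠ []) (S : Finset (PP α)) : Prop :=
  (∀ a ∈ S, ∀ b ∈ l, Incomp a b) ∧ (↑S : Set (PP α)).Pairwise Incomp ∧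
    ∀ a ∈ S, xmin l hl < a.2

theorem good_empty (l : List (PP α)) (hl : l ≠ []) : Good l hl ∅ :=
  ⟨by simp, by simp, by simp⟩

theorem good_snd_inj {l : List (PP α)} {hl : l ≠ []} {S : Finset (PP α)}
    (hS : Good l hl S) : ∀ z ∈ S, ∀ w ∈ S, z.2 = w.2 → z = w := by
  intro z hz w hw he
  by_contra hne
  exact snd_ne (hS.2.1 (Finset.mem_coe.2 hz) (Finset.mem_coe.2 hw) hne) he

theorem finite_Iio_omega (m : Ordinal.omega0.ToType) : (Set.Iio m).Finite := by
  rw [← Set.finite_coe_iff, ← Cardinal.lt_aleph0_iff_finite]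
  have h2 : Cardinal.mk (Set.Iio m) = (tyo m).card :=
    Ordinal.card_typein
      (r := ((· < ·) : Ordinal.omega0.ToType → Ordinal.omega0.ToType → Prop)) m
  rw [h2]
  obtain ⟨n, hn⟩ := Ordinal.lt_omega0.1 (tyo_lt_self m)
  rw [hn]
  simp [Cardinal.nat_lt_aleph0]

theorem bddAbove_cardSet (l : List (PP α)) (hl : l ≠ []) :
    BddAbove {k | ∃ S, Good l hl S ∧ S.card = k} := by
  classical
  obtain ⟨e, he, he2⟩ := exists_xmin hl
  have hfin := finite_Iio_omega e.1
  refine ⟨hfin.toFinset.card, ?_⟩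
  rintro k ⟨S, hS, rfl⟩
  apply Finset.card_le_card_of_injOn (fun a => a.1)
  · intro a ha
    rw [Finset.mem_coe, Set.Finite.mem_toFinset]
    exact fst_lt_of_incomp_of_le (hS.1 a ha e he) (he2 ▸ (hS.2.2 a ha).le)
  · intro a ha b hb he'
    by_contra hne
    exact fst_ne (hS.2.1 ha hb hne) he'

/-- The maximal size of a good set. -/
noncomputable def NN (l : List (PP α)) (hl : l ≠ []) : ℕ :=
  sSup {k | ∃ S, Good l hl S ∧ S.card = k}

theorem NN_attained (l : List (PP α)) (hl : l ≠ []) :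
    ∃ S, Good l hl S ∧ S.card = NN l hl := by
  refine Nat.sSup_mem ⟨0, ?_⟩ (bddAbove_cardSet l hl)
  exact ⟨∅, good_empty l hl, Finset.card_empty⟩

theorem card_le_NN {l : List (PP α)} {hl : l ≠ []} {S : Finset (PP α)} (hS : Good l hl S) :
    S.card ≤ NN l hl := by
  refine le_csSup (bddAbove_cardSet l hl) ?_
  exact ⟨S, hS, rfl⟩

/-- The decreasing ordinal invariant. -/
noncomputable def FF (l : List (PP α)) (hl : l ≠ []) : Ordinal.{u} :=
  tyo (xmin l hl) + ((NN l hl : ℕ) : Ordinal.{u})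

theorem aux_card : ∀ (n : ℕ) (s : Finset Ordinal.{u}) (x c : Ordinal.{u}), s.card = n → x < c →
    (∀ b ∈ s, x < b ∧ b < c) → x + (n : Ordinal.{u}) < c := by
  intro n
  induction n with
  | zero => intro s x c _ hxc _; simpa using hxc
  | succ n IH =>
    intro s x c hcard hxc hmem
    have hne : s.Nonempty := Finset.card_pos.1 (by omega)
    have hms : s.max' hne ∈ s := s.max'_mem hne
    have hrest : (s.erase (s.max' hne)).card = n := by
      rw [Finset.card_erase_of_mem hms, hcard]
      omega
    have h1 : x + (n : Ordinal.{u}) < s.max' hne := by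
      refine IH (s.erase (s.max' hne)) x (s.max' hne) hrest (hmem _ hms).1 ?_
      intro b hb
      have hbs := Finset.mem_of_mem_erase hb
      exact ⟨(hmem b hbs).1, lt_of_le_of_ne (Finset.le_max' s b hbs) (Finset.ne_of_mem_erase hb)⟩
    have h2 : x + ((n + 1 : ℕ) : Ordinal.{u}) = (x + (n : Ordinal.{u})) + 1 := by
      push_cast
      rw [add_assoc]
    rw [h2]
    calc (x + (n : Ordinal.{u})) + 1 ≤ s.max' hne := by
          rw [Ordinal.add_one_eq_succ]; exact Order.succ_le_iff.2 h1
      _ < c := (hmem _ hms).2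

theorem add_nat_lt {x y : Ordinal.{u}} (h : x < y) (n : ℕ) :
    x + (n : Ordinal.{u}) < y + (n : Ordinal.{u}) := by
  induction n with
  | zero => simpa
  | succ n IH =>
    have hx : x + ((n + 1 : ℕ) : Ordinal.{u}) = (x + (n : Ordinal.{u})) + 1 := by
      push_cast; rw [add_assoc]
    have hy : y + ((n + 1 : ℕ) : Ordinal.{u}) = (y + (n : Ordinal.{u})) + 1 := by
      push_cast; rw [add_assoc]
    rw [hx, hy, Ordinal.add_one_eq_succ, Ordinal.add_one_eq_succ]
    exact Order.succ_lt_succ IH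

set_option maxHeartbeats 1000000 in
theorem FF_lt (l : List (PP α)) (hl : l ≠ []) : FF l hl < α := by
  classical
  obtain ⟨S, hS, hcard⟩ := NN_attained l hl
  have hinj : Set.InjOn (fun z : PP α => tyo z.2) ↑S := by
    intro z hz w hw he
    exact good_snd_inj hS z (Finset.mem_coe.1 hz) w (Finset.mem_coe.1 hw) (tyo_inj he)
  have hcard2 : (S.image (fun z => tyo z.2)).card = NN l hl := by
    rw [Finset.card_image_of_injOn hinj, hcard]
  have hmain : tyo (xmin l hl) + ((NN l hl : ℕ) : Ordinal.{u}) < α := by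
    refine aux_card _ (S.image fun z => tyo z.2) _ _ hcard2 (tyo_lt_self _) ?_
    intro b hb
    rw [Finset.mem_image] at hb
    obtain ⟨z, hz, rfl⟩ := hb
    exact ⟨tyo_lt_tyo.2 (hS.2.2 z hz), tyo_lt_self _⟩
  exact hmain

theorem xmin_append_of_gt {l : List (PP α)} {hl : l ≠ []} {a : PP α} (hl' : l ++ [a] ≠ [])
    (h : xmin l hl < a.2) : xmin (l ++ [a]) hl' = xmin l hl := by
  apply le_antisymm
  · obtain ⟨e, he, he2⟩ := exists_xmin hl
    rw [← he2]
    exact xmin_le _ (List.mem_append_left _ he)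
  · apply le_xmin
    intro f hf
    rcases List.mem_append.1 hf with hf | hf
    · exact xmin_le _ hf
    · rw [List.mem_singleton.1 hf]; exact h.le

theorem xmin_append_of_lt {l : List (PP α)} {hl : l ≠ []} {a : PP α} (hl' : l ++ [a] ≠ [])
    (h : a.2 < xmin l hl) : xmin (l ++ [a]) hl' = a.2 := by
  apply le_antisymm
  · exact xmin_le _ (List.mem_append_right _ (List.mem_singleton_self a))
  · apply le_xmin
    intro f hf
    rcases List.mem_append.1 hf with hf | hf
    · exact h.le.trans (xmin_le hl hf)
    · rw [List.mem_singleton.1 hf]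

set_option maxHeartbeats 1000000 in
theorem FF_step (l : List (PP α)) (hl : l ≠ []) (a : PP α) (hl' : l ++ [a] ≠ [])
    (hinc : ∀ b ∈ l, Incomp b a) : FF (l ++ [a]) hl' < FF l hl := by
  classical
  obtain ⟨e, he, he2⟩ := exists_xmin hl
  have hane : a.2 ≠ xmin l hl := by
    rw [← he2]
    exact (snd_ne (hinc e he)).symm
  obtain ⟨S', hS', hcard'⟩ := NN_attained (l ++ [a]) hl'
  have hFF2 : FF l hl = tyo (xmin l hl) + ((NN l hl : ℕ) : Ordinal.{u}) := rfl
  have hFF1 : FF (l ++ [a]) hl' =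
      tyo (xmin (l ++ [a]) hl') + ((S'.card : ℕ) : Ordinal.{u}) := by
    rw [hcard']
    exact rfl
  rcases lt_or_gt_of_ne hane with hlt | hgt
  · -- new element below the old minimum
    have hx' : xmin (l ++ [a]) hl' = a.2 := xmin_append_of_lt hl' hlt
    have hSp : ∀ z ∈ S', a.2 < z.2 ∧ z.2 ≠ xmin l hl := by
      intro z hz
      refine ⟨?_, ?_⟩
      · have h0 := hS'.2.2 z hz
        rwa [hx'] at h0
      · rw [← he2]
        exact snd_ne (hS'.1 z hz e (List.mem_append_left _ he))
    set low := S'.filter (fun z => z.2 < xmin l hl) with hlowdef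
    set high := S'.filter (fun z => ¬ z.2 < xmin l hl) with hhighdef
    have hsplit : low.card + high.card = S'.card :=
      Finset.card_filter_add_card_filter_not _
    have hhigh_good : Good l hl high := by
      refine ⟨?_, ?_, ?_⟩
      · intro z hz b hb
        exact hS'.1 z (Finset.mem_of_mem_filter z hz) b (List.mem_append_left _ hb)
      · exact hS'.2.1.mono (Finset.coe_subset.2 (Finset.filter_subset _ _))
      · intro z hz
        obtain ⟨hzS, hznlt⟩ := Finset.mem_filter.1 hz
        exact lt_of_le_of_ne (not_lt.1 hznlt) (Ne.symm (hSp z hzS).2)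
    have hhi : high.card ≤ NN l hl := card_le_NN hhigh_good
    have hlowlt : tyo a.2 + ((low.card : ℕ) : Ordinal.{u}) < tyo (xmin l hl) := by
      have hinj : Set.InjOn (fun z : PP α => tyo z.2) ↑low := by
        intro z hz w hw hzw
        have hzS : z ∈ S' := Finset.mem_of_mem_filter z (Finset.mem_coe.1 hz)
        have hwS : w ∈ S' := Finset.mem_of_mem_filter w (Finset.mem_coe.1 hw)
        exact good_snd_inj hS' z hzS w hwS (tyo_inj hzw)
      refine aux_card _ (low.image fun z => tyo z.2) _ _
        (Finset.card_image_of_injOn hinj) (tyo_lt_tyo.2 hlt) ?_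
      intro b hb
      rw [Finset.mem_image] at hb
      obtain ⟨z, hz, rfl⟩ := hb
      obtain ⟨hzS, hzlt⟩ := Finset.mem_filter.1 hz
      exact ⟨tyo_lt_tyo.2 (hSp z hzS).1, tyo_lt_tyo.2 hzlt⟩
    rw [hFF1, hFF2, hx', ← hsplit]
    have hfin : tyo a.2 + (((low.card + high.card : ℕ) : ℕ) : Ordinal.{u}) =
        (tyo a.2 + ((low.card : ℕ) : Ordinal.{u})) + ((high.card : ℕ) : Ordinal.{u}) := by
      push_cast
      rw [add_assoc]
    rw [hfin]
    calc (tyo a.2 + ((low.card : ℕ) : Ordinal.{u})) + ((high.card : ℕ) : Ordinal.{u}) <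
        tyo (xmin l hl) + ((high.card : ℕ) : Ordinal.{u}) := add_nat_lt hlowlt _
      _ ≤ tyo (xmin l hl) + ((NN l hl : ℕ) : Ordinal.{u}) := by
          exact add_le_add_right (by exact_mod_cast hhi) _
  · -- new element above the old minimum
    have hx' : xmin (l ++ [a]) hl' = xmin l hl := xmin_append_of_gt hl' hgt
    have hanot : a ∉ S' := by
      intro haS
      exact (hS'.1 a haS a (List.mem_append_right _ (List.mem_singleton_self a))).1 le_rfl
    have hgood : Good l hl (insert a S') := by
      refine ⟨?_, ?_, ?_⟩
      · intro z hz b hb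
        rcases Finset.mem_insert.1 hz with rfl | hz
        · exact (hinc b hb).symm
        · exact hS'.1 z hz b (List.mem_append_left _ hb)
      · rw [Finset.coe_insert]
        refine (haveI : Std.Symm (Incomp (Q := PP α)) := ⟨incomp_symmetric⟩; Set.pairwise_insert_of_symm).2 ⟨hS'.2.1, ?_⟩
        intro z hz _
        exact (hS'.1 z (Finset.mem_coe.1 hz) a (List.mem_append_right _
          (List.mem_singleton_self a))).symm
      · intro z hz
        rcases Finset.mem_insert.1 hz with rfl | hz
        · exact hgt
        · rw [← hx']
          exact hS'.2.2 z hz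
    have hle : S'.card + 1 ≤ NN l hl := by
      have h0 := card_le_NN hgood
      rwa [Finset.card_insert_of_notMem hanot] at h0
    rw [hFF1, hFF2, hx']
    apply add_lt_add_right
    exact_mod_cast (by omega : S'.card < NN l hl)

theorem FF_congr {l1 l2 : List (PP α)} (h : l1 = l2) (h1 : l1 ≠ []) (h2 : l2 ≠ []) :
    FF l1 h1 = FF l2 h2 := by subst h; rfl

theorem FF_ext (l : List (PP α)) (hl : l ≠ []) :
    ∀ (u : List (PP α)), u ≠ [] → (l ++ u).Pairwise Incomp → ∀ (hlu : l ++ u ≠ []),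
      FF (l ++ u) hlu < FF l hl := by
  intro u
  induction u using List.reverseRecOn with
  | nil => intro h; exact absurd rfl h
  | append_singleton u b IH =>
    intro _ hp hlu
    have hassoc : l ++ (u ++ [b]) = (l ++ u) ++ [b] := (List.append_assoc _ _ _).symm
    have hp2 : ((l ++ u) ++ [b]).Pairwise Incomp := hassoc ▸ hp
    have hmidne : l ++ u ≠ [] := by simp [hl]
    have hinc : ∀ c ∈ l ++ u, Incomp c b := by
      intro c hc
      exact (List.pairwise_append.1 hp2).2.2 c hc b (List.mem_singleton_self b)
    have hstep : FF ((l ++ u) ++ [b]) (by simp [hmidne]) < FF (l ++ u) hmidne :=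
      FF_step (l ++ u) hmidne b _ hinc
    rw [FF_congr hassoc hlu (by simp [hmidne])]
    rcases eq_or_ne u [] with rfl | hu
    · exact lt_of_lt_of_le hstep (le_of_eq (FF_congr (by simp) _ _))
    · exact hstep.trans (IH hu (hp2.sublist (List.sublist_append_left (l ++ u) [b])) hmidne)

/-- The invariant on the tree of antichain sequences. -/
noncomputable def FT (t : ↥(IncSeqs (PP α))) : Ordinal.{u} := FF t.1 t.2.1

theorem FT_dec {s t : ↥(IncSeqs (PP α))} (h : extRel (IncSeqs (PP α)) s t) : FT s < FT t := by
  obtain ⟨⟨u, hu⟩, hne⟩ := h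
  have hu' : u ≠ [] := by
    rintro rfl
    rw [List.append_nil] at hu
    exact hne hu
  have hpw : (t.1 ++ u).Pairwise Incomp := by
    rw [hu]
    exact s.2.2
  have hlu : t.1 ++ u ≠ [] := by simp [t.2.1]
  have h1 : FF (t.1 ++ u) hlu < FF t.1 t.2.1 := FF_ext t.1 t.2.1 u hu' hpw hlu
  have h2 : FT s = FF (t.1 ++ u) hlu := FF_congr hu.symm s.2.1 hlu
  rw [h2]
  exact h1

theorem wf_ext : WellFounded (extRel (IncSeqs (PP α))) :=
  Subrelation.wf (fun h => FT_dec h) (InvImage.wf FT Ordinal.lt_wf)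

theorem rank_le_of_dec {β : Type u} {r : β → β → Prop} (hwf : WellFounded r)
    (f : β → Ordinal.{u}) (hf : ∀ x y, r x y → f x < f y) (a : β) :
    (hwf.apply a).rank ≤ f a := by
  refine hwf.induction (C := fun a => (hwf.apply a).rank ≤ f a) a ?_
  intro b IH
  rw [Acc.rank_eq]
  apply Ordinal.iSup_le
  rintro ⟨c, hc⟩
  rw [Order.succ_le_iff]
  exact lt_of_le_of_lt (IH c hc) (hf c b hc)

theorem rank_lt_of_rel' {β : Type u} {r : β → β → Prop} (hwf : WellFounded r) {a b : β}
    (h : r a b) : (hwf.apply a).rank < (hwf.apply b).rank :=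
  Acc.rank_lt_of_rel (hwf.apply b) h

set_option maxHeartbeats 1000000 in
theorem rank_ge (hwf : WellFounded (extRel (IncSeqs (PP α)))) :
    ∀ (β : Ordinal.{u}) (t : ↥(IncSeqs (PP α))), β ≤ tyo (xmin t.1 t.2.1) →
      β ≤ (hwf.apply t).rank := by
  intro β
  induction β using Ordinal.induction with
  | h β IH =>
    intro t hβ
    apply le_of_forall_lt
    intro γ hγ
    have hγx : γ < tyo (xmin t.1 t.2.1) := hγ.trans_le hβ
    have hγα : γ < type ((· < ·) : α.ToType → α.ToType → Prop) := by
      rw [type_toType]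
      exact hγx.trans (tyo_lt_self _)
    have hyx : enum ((· < ·) : α.ToType → α.ToType → Prop) ⟨γ, hγα⟩ < xmin t.1 t.2.1 := by
      rw [← tyo_lt_tyo, tyo_enum hγα]
      exact hγx
    obtain ⟨e0, he0⟩ := List.exists_mem_of_ne_nil t.1 t.2.1
    obtain ⟨n, hn⟩ := exists_ub_list t.1 ⟨e0.1⟩
    set a : PP α := (n, enum ((· < ·) : α.ToType → α.ToType → Prop) ⟨γ, hγα⟩) with ha
    have hIncl : ∀ b ∈ t.1, Incomp b a := by
      intro b hb
      constructor
      · intro hle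
        exact absurd hle.2 (not_le.2 (hyx.trans_le (xmin_le t.2.1 hb)))
      · intro hle
        exact absurd hle.1 (not_le.2 (hn b hb))
    have hmem : t.1 ++ [a] ∈ IncSeqs (PP α) := by
      refine ⟨by simp [t.2.1], ?_⟩
      refine List.pairwise_append.2 ⟨t.2.2, List.pairwise_singleton _ _, ?_⟩
      intro x hx y' hy'
      rw [List.mem_singleton.1 hy']
      exact hIncl x hx
    set t' : ↥(IncSeqs (PP α)) := ⟨t.1 ++ [a], hmem⟩ with ht'
    have hrel : extRel (IncSeqs (PP α)) t' t := ⟨⟨[a], rfl⟩, by simp [ht']⟩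
    have hx' : xmin t'.1 t'.2.1 = a.2 := xmin_append_of_lt _ hyx
    have h1 : γ ≤ (hwf.apply t').rank := by
      refine IH γ hγ t' ?_
      rw [hx', ha]
      exact (tyo_enum hγα).ge
    exact lt_of_le_of_lt h1 (rank_lt_of_rel' hwf hrel)

end Stmt17

end Stmt17Aux

/-- **Abraham.** `w(ω × α) = α` for every ordinal `α`. -/
theorem stmt_17 (α : Ordinal.{u}) :
    width (Ordinal.omega0.ToType × α.ToType) = α := by
  have hwf : WellFounded (extRel (IncSeqs (Stmt17.PP α))) := Stmt17.wf_ext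
  unfold width treeRank relRank
  rw [dif_pos hwf]
  apply le_antisymm
  · apply Ordinal.iSup_le
    intro t
    rw [Order.succ_le_iff]
    exact lt_of_le_of_lt
      (Stmt17.rank_le_of_dec hwf Stmt17.FT (fun x y h => Stmt17.FT_dec h) t)
      (Stmt17.FF_lt t.1 t.2.1)
  · apply le_of_forall_lt
    intro β hβ
    have hβα : β < Ordinal.type ((· < ·) : α.ToType → α.ToType → Prop) := by
      rw [Ordinal.type_toType]
      exact hβ
    obtain ⟨w0⟩ : Nonempty Ordinal.omega0.ToType :=
      Ordinal.nonempty_toType_iff.2 Ordinal.omega0_ne_zero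
    have hmem : [((w0 : Ordinal.omega0.ToType),
        Ordinal.enum ((· < ·) : α.ToType → α.ToType → Prop) ⟨β, hβα⟩)] ∈
        IncSeqs (Stmt17.PP α) := ⟨by simp, List.pairwise_singleton _ _⟩
    set t0 : ↥(IncSeqs (Stmt17.PP α)) := ⟨[(w0,
      Ordinal.enum ((· < ·) : α.ToType → α.ToType → Prop) ⟨β, hβα⟩)], hmem⟩ with ht0
    have hx0 : Stmt17.xmin t0.1 t0.2.1 =
        Ordinal.enum ((· < ·) : α.ToType → α.ToType → Prop) ⟨β, hβα⟩ := by
      apply le_antisymm (Stmt17.xmin_le t0.2.1 (List.mem_singleton_self _))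
      apply Stmt17.le_xmin t0.2.1
      intro f hf
      rw [List.mem_singleton.1 hf]
    have h1 : β ≤ ((hwf.apply t0).rank) := by
      refine Stmt17.rank_ge hwf β t0 ?_
      rw [hx0]
      exact (Stmt17.tyo_enum hβα).ge
    calc β < Order.succ ((hwf.apply t0).rank) := Order.lt_succ_iff.2 h1
      _ ≤ ⨆ a, Order.succ ((hwf.apply a).rank) := Ordinal.le_iSup _ t0
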